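/- For every n ≥ 1 and every τ ∈ S_n, ∑_{g∈S_n} d̃es(g)·d̃es(g⁻¹τ) = −(n−1)!·d̃es(τ), where d̃es(σ) = des(σ) − (n−1)/2. In particular, −d̃es/(n−1)! is an idempotent under convolution in ℚ[S_n]. -/

import Mathlib

def descents (n : ℕ) (σ : Equiv.Perm (Fin n)) : Finset (Fin (n - 1)) :=
  Finset.univ.filter fun i =>
    σ ⟨i.1 + 1, by have := i.isLt; omega⟩ < σ ⟨i.1, by have := i.isLt; omega⟩

def desStat (n : ℕ) (σ : Equiv.Perm (Fin n)) : ℕ := (descents n σ).card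

def majStat (n : ℕ) (σ : Equiv.Perm (Fin n)) : ℕ := ∑ i ∈ descents n σ, (i.1 + 1)

def invStat (n : ℕ) (σ : Equiv.Perm (Fin n)) : ℕ :=
  (Finset.univ.filter fun p : Fin n × Fin n => p.1 < p.2 ∧ σ p.2 < σ p.1).card

def fixStat (n : ℕ) (σ : Equiv.Perm (Fin n)) : ℕ :=
  (Finset.univ.filter fun i : Fin n => σ i = i).card

noncomputable def majC (n : ℕ) (σ : Equiv.Perm (Fin n)) : ℚ :=
  (majStat n σ : ℚ) - n * (n - 1) / 4

noncomputable def desC (n : ℕ) (σ : Equiv.Perm (Fin n)) : ℚ :=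
  (desStat n σ : ℚ) - (n - 1) / 2

noncomputable def invC (n : ℕ) (σ : Equiv.Perm (Fin n)) : ℚ :=
  (invStat n σ : ℚ) - n * (n - 1) / 4

open Finset Equiv

lemma card_fix_two {n : ℕ} (a b : Fin n) (hab : a ≠ b) :
    (Finset.univ.filter fun g : Equiv.Perm (Fin n) => g a = a ∧ g b = b).card
      = (n - 2).factorial := by
  classical
  have e1 : {g : Equiv.Perm (Fin n) // g a = a ∧ g b = b}
      ≃ Equiv.Perm {x : Fin n // x ≠ a ∧ x ≠ b} := by
    refine (Equiv.subtypeEquiv (Equiv.refl _) ?_).trans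
      (Equiv.Perm.subtypeEquivSubtypePerm (fun x : Fin n => x ≠ a ∧ x ≠ b)).symm
    intro g
    simp only [Equiv.refl_apply]
    constructor
    · rintro ⟨h1, h2⟩ x hx
      rcases not_and_or.1 hx with h | h
      · rw [not_ne_iff.1 h]; exact h1
      · rw [not_ne_iff.1 h]; exact h2
    · intro h
      exact ⟨h a (by simp), h b (by simp)⟩
  have hc : Fintype.card {x : Fin n // x ≠ a ∧ x ≠ b} = n - 2 := by
    rw [Fintype.card_subtype]
    have : (Finset.univ.filter fun x : Fin n => x ≠ a ∧ x ≠ b)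
        = Finset.univ \ {a, b} := by
      ext x; simp [and_comm]
    rw [this, Finset.card_sdiff_of_subset (by simp)]
    simp [Finset.card_insert_of_notMem, hab]
  calc (Finset.univ.filter fun g : Equiv.Perm (Fin n) => g a = a ∧ g b = b).card
      = Fintype.card {g : Equiv.Perm (Fin n) // g a = a ∧ g b = b} :=
        (Fintype.card_subtype _).symm
    _ = Fintype.card (Equiv.Perm {x : Fin n // x ≠ a ∧ x ≠ b}) := Fintype.card_congr e1
    _ = (n - 2).factorial := by rw [Fintype.card_perm, hc]

lemma card_send_two {n : ℕ} (a b s t : Fin n) (hab : a ≠ b) (hst : s ≠ t) :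
    (Finset.univ.filter fun g : Equiv.Perm (Fin n) => g a = s ∧ g b = t).card
      = (n - 2).factorial := by
  classical
  -- construct g₀ with g₀ a = s, g₀ b = t
  set c : Equiv.Perm (Fin n) := Equiv.swap a s with hc
  set d : Equiv.Perm (Fin n) := Equiv.swap (c b) t with hd
  have hca : c a = s := Equiv.swap_apply_left a s
  have hcbs : c b ≠ s := by
    intro h
    exact hab (c.injective (by rw [h, hca]))
  have g0a : (d * c) a = s := by
    simp only [Equiv.Perm.mul_apply, hca]
    exact Equiv.swap_apply_of_ne_of_ne (Ne.symm hcbs) hst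
  have g0b : (d * c) b = t := by
    simp only [Equiv.Perm.mul_apply]
    exact Equiv.swap_apply_left _ _
  set g₀ := d * c with hg0
  rw [← card_fix_two a b hab]
  apply Finset.card_bij (fun g _ => g₀⁻¹ * g)
  · intro g hg
    simp only [Finset.mem_filter, Finset.mem_univ, true_and] at hg ⊢
    rw [Equiv.Perm.mul_apply, Equiv.Perm.mul_apply, hg.1, hg.2, ← g0a, ← g0b]
    simp
  · intro g1 h1 g2 h2 h
    exact mul_left_cancel h
  · intro h hh
    simp only [Finset.mem_filter, Finset.mem_univ, true_and] at hh
    refine ⟨g₀ * h, ?_, by group⟩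
    simp only [Finset.mem_filter, Finset.mem_univ, true_and, Equiv.Perm.mul_apply]
    rw [hh.1, hh.2, g0a, g0b]
    exact ⟨rfl, rfl⟩

/-- first position of index i -/
def posA (n : ℕ) (i : Fin (n - 1)) : Fin n := ⟨i.1, by have := i.isLt; omega⟩
def posB (n : ℕ) (i : Fin (n - 1)) : Fin n := ⟨i.1 + 1, by have := i.isLt; omega⟩

noncomputable def eS (n : ℕ) (i : Fin (n - 1)) (σ : Equiv.Perm (Fin n)) : ℚ :=
  if σ (posB n i) < σ (posA n i) then 1 else -1

lemma desC_eq (n : ℕ) (hn : 1 ≤ n) (σ : Equiv.Perm (Fin n)) :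
    desC n σ = (∑ i : Fin (n - 1), eS n i σ) / 2 := by
  classical
  have h : ∑ i : Fin (n - 1), eS n i σ
      = ∑ i : Fin (n - 1),
        ((if σ (posB n i) < σ (posA n i) then (2:ℚ) else 0) - 1) := by
    apply Finset.sum_congr rfl
    intro i _
    unfold eS
    split_ifs <;> norm_num
  rw [h, Finset.sum_sub_distrib, ← Finset.sum_filter]
  have hcard : (Finset.univ.filter fun i : Fin (n-1) =>
      σ (posB n i) < σ (posA n i)) = descents n σ := rfl
  rw [hcard]
  simp only [Finset.sum_const, Finset.card_univ, Fintype.card_fin, nsmul_eq_mul, mul_one]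
  unfold desC desStat
  have : ((n - 1 : ℕ) : ℚ) = (n : ℚ) - 1 := by
    have := hn; push_cast [Nat.cast_sub hn]; ring
  rw [this]
  ring

lemma swap_lt_iff {n : ℕ} (a b x y : Fin n) (hb : b.1 = a.1 + 1) (hxy : x ≠ y)
    (h : ¬((x = a ∧ y = b) ∨ (x = b ∧ y = a))) :
    (Equiv.swap a b y < Equiv.swap a b x ↔ y < x) := by
  have hxy' : x.1 ≠ y.1 := fun hv => hxy (Fin.ext hv)
  simp only [Equiv.swap_apply_def, Fin.lt_def, apply_ite (Fin.val), Fin.ext_iff]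
  simp only [Fin.ext_iff, not_and_or, not_or] at h
  split_ifs <;> omega

lemma keyB (n : ℕ) (i : Fin (n - 1)) (s t : Fin n) (hst : s ≠ t) :
    ∑ g : Equiv.Perm (Fin n), eS n i g * (if g⁻¹ t < g⁻¹ s then (1:ℚ) else -1)
      = -(2 * ((n - 2).factorial : ℚ)) * (if t < s then 1 else -1) := by
  classical
  set a := posA n i with ha
  set b := posB n i with hbdef
  have hb : b.1 = a.1 + 1 := rfl
  have hab : a ≠ b := by
    intro h
    have := congrArg Fin.val h
    omega
  set f : Equiv.Perm (Fin n) → ℚ :=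
    fun g => eS n i g * (if g⁻¹ t < g⁻¹ s then (1:ℚ) else -1) with hf
  have hsplit := Finset.sum_filter_add_sum_filter_not Finset.univ
    (fun g : Equiv.Perm (Fin n) => (g a = s ∧ g b = t) ∨ (g a = t ∧ g b = s)) f
  rw [← hsplit]
  have hswap_a : Equiv.swap a b a = b := Equiv.swap_apply_left a b
  have hswap_b : Equiv.swap a b b = a := Equiv.swap_apply_right a b
  have h2 : ∑ g ∈ Finset.univ.filter (fun g : Equiv.Perm (Fin n) =>
      ¬((g a = s ∧ g b = t) ∨ (g a = t ∧ g b = s))), f g = 0 := by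
    apply Finset.sum_involution (fun g _ => g * Equiv.swap a b)
    · intro g hg
      simp only [Finset.mem_filter, Finset.mem_univ, true_and] at hg
      have hmb : (g * Equiv.swap a b) (posB n i) = g a := by
        simp only [Equiv.Perm.mul_apply, ← hbdef, hswap_b]
      have hma : (g * Equiv.swap a b) (posA n i) = g b := by
        simp only [Equiv.Perm.mul_apply, ← ha, hswap_a]
      have hgab : g a ≠ g b := fun h => hab (g.injective h)
      have hinv : (g * Equiv.swap a b)⁻¹ = Equiv.swap a b * g⁻¹ := by
        rw [mul_inv_rev, Equiv.swap_inv]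
      have hxne : g⁻¹ s ≠ g⁻¹ t := fun h => hst (g⁻¹.injective h)
      have hcond : ¬((g⁻¹ s = a ∧ g⁻¹ t = b) ∨ (g⁻¹ s = b ∧ g⁻¹ t = a)) := by
        intro hc
        apply hg
        rcases hc with ⟨h1, h2⟩ | ⟨h1, h2⟩
        · exact Or.inl ⟨by rw [← h1]; simp, by rw [← h2]; simp⟩
        · exact Or.inr ⟨by rw [← h2]; simp, by rw [← h1]; simp⟩
      have hsecond : (if (g * Equiv.swap a b)⁻¹ t < (g * Equiv.swap a b)⁻¹ s
          then (1:ℚ) else -1) = (if g⁻¹ t < g⁻¹ s then (1:ℚ) else -1) := by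
        rw [hinv]
        simp only [Equiv.Perm.mul_apply]
        simp only [swap_lt_iff a b (g⁻¹ s) (g⁻¹ t) hb hxne hcond]
      have hfirst : eS n i (g * Equiv.swap a b) = - eS n i g := by
        unfold eS
        rw [hmb, hma]
        rcases hgab.lt_or_gt with h | h
        · rw [if_neg (asymm h), if_pos h]; norm_num
        · rw [if_pos h, if_neg (asymm h)]
      simp only [hf, hsecond, hfirst]
      ring
    · intro g hg _
      intro h
      have := congrArg (fun p : Equiv.Perm (Fin n) => p b) h
      simp only [Equiv.Perm.mul_apply, hswap_b] at this
      exact hab (g.injective this)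
    · intro g hg
      simp only [Finset.mem_filter, Finset.mem_univ, true_and] at hg ⊢
      simp only [Equiv.Perm.mul_apply, hswap_a, hswap_b]
      tauto
    · intro g hg
      rw [mul_assoc, Equiv.swap_mul_self, mul_one]
  rw [h2, add_zero]
  have hdisj : Disjoint
      (Finset.univ.filter fun g : Equiv.Perm (Fin n) => g a = s ∧ g b = t)
      (Finset.univ.filter fun g : Equiv.Perm (Fin n) => g a = t ∧ g b = s) := by
    rw [Finset.disjoint_left]
    intro g hg1 hg2
    simp only [Finset.mem_filter, Finset.mem_univ, true_and] at hg1 hg2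
    exact hst (hg1.1 ▸ hg2.1 ▸ rfl)
  have hor : (Finset.univ.filter fun g : Equiv.Perm (Fin n) =>
      (g a = s ∧ g b = t) ∨ (g a = t ∧ g b = s))
      = (Finset.univ.filter fun g : Equiv.Perm (Fin n) => g a = s ∧ g b = t)
        ∪ (Finset.univ.filter fun g : Equiv.Perm (Fin n) => g a = t ∧ g b = s) :=
    Finset.filter_or _ _ _
  rw [hor, Finset.sum_union hdisj]
  have hnotba : ¬(b < a) := by
    simp only [Fin.lt_def]; omega
  have hab' : a < b := by
    simp only [Fin.lt_def]; omega
  have hsum1 : ∑ g ∈ (Finset.univ.filter fun g : Equiv.Perm (Fin n) =>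
      g a = s ∧ g b = t), f g
      = ((n - 2).factorial : ℚ) * ((if t < s then (1:ℚ) else -1) * (-1)) := by
    rw [Finset.sum_congr rfl (fun g hg => ?_), Finset.sum_const,
      card_send_two a b s t hab hst, nsmul_eq_mul]
    simp only [Finset.mem_filter, Finset.mem_univ, true_and] at hg
    have h1 : g⁻¹ t = b := by rw [← hg.2]; simp
    have h2 : g⁻¹ s = a := by rw [← hg.1]; simp
    simp only [hf, eS, ← ha, ← hbdef, hg.1, hg.2, h1, h2, if_neg hnotba]
  have hsum2 : ∑ g ∈ (Finset.univ.filter fun g : Equiv.Perm (Fin n) =>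
      g a = t ∧ g b = s), f g
      = ((n - 2).factorial : ℚ) * (if s < t then (1:ℚ) else -1) := by
    rw [Finset.sum_congr rfl (fun g hg => ?_), Finset.sum_const,
      card_send_two a b t s hab (Ne.symm hst), nsmul_eq_mul]
    simp only [Finset.mem_filter, Finset.mem_univ, true_and] at hg
    have h1 : g⁻¹ t = a := by rw [← hg.1]; simp
    have h2 : g⁻¹ s = b := by rw [← hg.2]; simp
    simp only [hf, eS, ← ha, ← hbdef, hg.1, hg.2, h1, h2, if_pos hab', mul_one]
  rw [hsum1, hsum2]
  rcases hst.lt_or_gt with h | h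
  · rw [if_neg (asymm h), if_pos h]; ring
  · rw [if_pos h, if_neg (asymm h)]; ring

lemma posA_ne_posB (n : ℕ) (j : Fin (n - 1)) : posA n j ≠ posB n j := by
  intro h
  have := congrArg Fin.val h
  simp only [posA, posB] at this
  omega


theorem des_conv_des (n : ℕ) (hn : 1 ≤ n) :
    (∀ τ : Equiv.Perm (Fin n),
      ∑ g : Equiv.Perm (Fin n), desC n g * desC n (g⁻¹ * τ) =
        -((n - 1).factorial : ℚ) * desC n τ) ∧
    (∀ τ : Equiv.Perm (Fin n),
      ∑ g : Equiv.Perm (Fin n),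
          (-(desC n g / ((n - 1).factorial : ℚ))) * (-(desC n (g⁻¹ * τ) / ((n - 1).factorial : ℚ))) =
        -(desC n τ / ((n - 1).factorial : ℚ))) := by
  classical
  have c0 : ((n - 1).factorial : ℚ) ≠ 0 := Nat.cast_ne_zero.2 (Nat.factorial_ne_zero _)
  have part1 : ∀ τ : Equiv.Perm (Fin n),
      ∑ g : Equiv.Perm (Fin n), desC n g * desC n (g⁻¹ * τ) =
        -((n - 1).factorial : ℚ) * desC n τ := by
    intro τ
    rcases Nat.eq_or_lt_of_le hn with h1 | h2
    · -- n = 1 : everything vanishes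
      have hzero : ∀ σ : Equiv.Perm (Fin n), desC n σ = 0 := by
        intro σ
        unfold desC desStat
        have hd : descents n σ = ∅ := by
          apply Finset.eq_empty_of_forall_notMem
          intro x _
          have := x.isLt
          omega
        have hn1 : (n : ℚ) = 1 := by exact_mod_cast h1.symm
        rw [hd, hn1]
        norm_num
      simp [hzero]
    have hA : ∀ σ : Equiv.Perm (Fin n), desC n σ = (∑ i : Fin (n - 1), eS n i σ) / 2 :=
      fun σ => desC_eq n hn σ
    have key : ∀ (j : Fin (n - 1)) (g : Equiv.Perm (Fin n)),
        eS n j (g⁻¹ * τ)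
          = (if g⁻¹ (τ (posB n j)) < g⁻¹ (τ (posA n j)) then (1:ℚ) else -1) := by
      intro j g
      simp [eS, Equiv.Perm.mul_apply]; rfl
    have inner : ∀ i j : Fin (n - 1),
        ∑ g : Equiv.Perm (Fin n), eS n i g * eS n j (g⁻¹ * τ)
          = -(2 * ((n - 2).factorial : ℚ)) * eS n j τ := by
      intro i j
      have hst : τ (posA n j) ≠ τ (posB n j) :=
        fun h => posA_ne_posB n j (τ.injective h)
      calc ∑ g : Equiv.Perm (Fin n), eS n i g * eS n j (g⁻¹ * τ)
          = ∑ g : Equiv.Perm (Fin n), eS n i g *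
              (if g⁻¹ (τ (posB n j)) < g⁻¹ (τ (posA n j)) then (1:ℚ) else -1) :=
            Finset.sum_congr rfl fun g _ => by rw [key j g]
        _ = -(2 * ((n - 2).factorial : ℚ))
              * (if τ (posB n j) < τ (posA n j) then (1:ℚ) else -1) :=
            keyB n i (τ (posA n j)) (τ (posB n j)) hst
        _ = -(2 * ((n - 2).factorial : ℚ)) * eS n j τ := rfl
    have hfact : ((n - 1).factorial : ℚ)
        = ((n - 1 : ℕ) : ℚ) * ((n - 2).factorial : ℚ) := by
      rw [← Nat.cast_mul]
      congr 1
      rw [show n - 1 = (n - 2) + 1 from (by omega), Nat.factorial_succ]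
    calc ∑ g : Equiv.Perm (Fin n), desC n g * desC n (g⁻¹ * τ)
        = ∑ g : Equiv.Perm (Fin n), ∑ i : Fin (n - 1), ∑ j : Fin (n - 1),
            eS n i g * eS n j (g⁻¹ * τ) / 4 := by
          refine Finset.sum_congr rfl fun g _ => ?_
          rw [hA g, hA (g⁻¹ * τ), div_mul_div_comm, Finset.sum_mul_sum]
          rw [show (2:ℚ) * 2 = 4 by norm_num]
          simp only [Finset.sum_div]
      _ = ∑ i : Fin (n - 1), ∑ j : Fin (n - 1),
            (∑ g : Equiv.Perm (Fin n), eS n i g * eS n j (g⁻¹ * τ)) / 4 := by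
          rw [Finset.sum_comm]
          refine Finset.sum_congr rfl fun i _ => ?_
          rw [Finset.sum_comm]
          refine Finset.sum_congr rfl fun j _ => ?_
          rw [Finset.sum_div]
      _ = ∑ i : Fin (n - 1), ∑ j : Fin (n - 1),
            (-(2 * ((n - 2).factorial : ℚ)) * eS n j τ) / 4 := by
          simp only [inner]
      _ = ((n - 1 : ℕ) : ℚ) * ∑ j : Fin (n - 1),
            (-(2 * ((n - 2).factorial : ℚ)) * eS n j τ) / 4 := by
          rw [Finset.sum_const, Finset.card_univ, Fintype.card_fin, nsmul_eq_mul]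
      _ = -((n - 1).factorial : ℚ) * ((∑ j : Fin (n - 1), eS n j τ) / 2) := by
          rw [hfact]
          simp only [Finset.mul_sum, Finset.sum_div]
          exact Finset.sum_congr rfl fun j _ => by ring
      _ = -((n - 1).factorial : ℚ) * desC n τ := by rw [← hA τ]
  refine ⟨part1, fun τ => ?_⟩
  have h1 : ∑ g : Equiv.Perm (Fin n),
      (-(desC n g / ((n - 1).factorial : ℚ))) * (-(desC n (g⁻¹ * τ) / ((n - 1).factorial : ℚ)))
      = (∑ g : Equiv.Perm (Fin n), desC n g * desC n (g⁻¹ * τ))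
          / (((n - 1).factorial : ℚ) * ((n - 1).factorial : ℚ)) := by
    rw [Finset.sum_div]
    refine Finset.sum_congr rfl fun g _ => ?_
    field_simp
    try ring
  rw [h1, part1 τ]
  field_simp
  try ring
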